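/- Let W_1,...,W_9 be positive weights on the 3×3 grid with the column-proportionality property (W_{i+3} = R₄ W_i and W_{i+6} = R₇ W_i for i = 1,2,3). Then the weighted moment matrix A = Σ_{i=1}^{9} W_i p(x_i) p(x_i)^T with p(x,y) = (1, x, y)^T has the form of a block structure in which the (2,3) and (3,2) entries of A^{-1} vanish, provided A is invertible. -/
import Mathlib


open Finset Matrix

/-- With column-proportional weights on the 3×3 grid, the inverse of the
weighted moment matrix `A = Σ Wᵢ p(xᵢ) p(xᵢ)ᵀ` (linear basis `p = (1,x,y)ᵀ`)
has vanishing (2,3) and (3,2) entries. -/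
theorem moment_matrix_inverse_entry_vanishes
    (x y W : ℕ → ℝ) (y1 y4 y7 R4 R7 : ℝ)
    (hWpos : ∀ i < 9, 0 < W i) (hR4 : 0 < R4) (hR7 : 0 < R7)
    (hcol1 : ∀ i < 3, x (i + 3) = x i) (hcol2 : ∀ i < 3, x (i + 6) = x i)
    (hrow1 : ∀ i < 3, y i = y1) (hrow2 : ∀ i < 3, y (i + 3) = y4)
    (hrow3 : ∀ i < 3, y (i + 6) = y7)
    (hW4 : ∀ i < 3, W (i + 3) = R4 * W i)
    (hW7 : ∀ i < 3, W (i + 6) = R7 * W i)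
    (A : Matrix (Fin 3) (Fin 3) ℝ)
    (hA : A = ∑ i ∈ Finset.range 9,
        W i • Matrix.vecMulVec ![1, x i, y i] ![1, x i, y i])
    (hdet : IsUnit A.det) :
    A⁻¹ 1 2 = 0 ∧ A⁻¹ 2 1 = 0 := by
  have hx3 : x 3 = x 0 := hcol1 0 (by norm_num)
  have hx4 : x 4 = x 1 := hcol1 1 (by norm_num)
  have hx5 : x 5 = x 2 := hcol1 2 (by norm_num)
  have hx6 : x 6 = x 0 := hcol2 0 (by norm_num)
  have hx7 : x 7 = x 1 := hcol2 1 (by norm_num)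
  have hx8 : x 8 = x 2 := hcol2 2 (by norm_num)
  have hy0 : y 0 = y1 := hrow1 0 (by norm_num)
  have hy1 : y 1 = y1 := hrow1 1 (by norm_num)
  have hy2 : y 2 = y1 := hrow1 2 (by norm_num)
  have hy3 : y 3 = y4 := hrow2 0 (by norm_num)
  have hy4 : y 4 = y4 := hrow2 1 (by norm_num)
  have hy5 : y 5 = y4 := hrow2 2 (by norm_num)
  have hy6 : y 6 = y7 := hrow3 0 (by norm_num)
  have hy7 : y 7 = y7 := hrow3 1 (by norm_num)
  have hy8 : y 8 = y7 := hrow3 2 (by norm_num)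
  have hw3 : W 3 = R4 * W 0 := hW4 0 (by norm_num)
  have hw4 : W 4 = R4 * W 1 := hW4 1 (by norm_num)
  have hw5 : W 5 = R4 * W 2 := hW4 2 (by norm_num)
  have hw6 : W 6 = R7 * W 0 := hW7 0 (by norm_num)
  have hw7 : W 7 = R7 * W 1 := hW7 1 (by norm_num)
  have hw8 : W 8 = R7 * W 2 := hW7 2 (by norm_num)
  have hent : ∀ i j : Fin 3, A i j =
      ∑ k ∈ Finset.range 9, W k * (![1, x k, y k] i * ![1, x k, y k] j) := by
    intro i j
    rw [hA]
    simp only [Matrix.sum_apply, Matrix.smul_apply, Matrix.vecMulVec_apply, smul_eq_mul]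
  have hadj : A.adjugate 1 2 = 0 ∧ A.adjugate 2 1 = 0 := by
    rw [Matrix.adjugate_fin_three]
    constructor <;>
    · simp only [Matrix.cons_val', Matrix.cons_val_zero, Matrix.cons_val_one,
        Matrix.head_cons, Matrix.head_fin_const, Matrix.cons_val_fin_one,
        Matrix.empty_val', Matrix.cons_val_two, Matrix.tail_cons, Matrix.of_apply]
      rw [hent, hent, hent, hent]
      simp only [Finset.sum_range_succ, Finset.sum_range_zero,
        Matrix.cons_val_zero, Matrix.cons_val_one, Matrix.head_cons,
        Matrix.cons_val_two, Matrix.tail_cons,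
        hx3, hx4, hx5, hx6, hx7, hx8, hy0, hy1, hy2, hy3, hy4, hy5, hy6, hy7, hy8,
        hw3, hw4, hw5, hw6, hw7, hw8]
      ring
  rw [Matrix.inv_def]
  simp [hadj.1, hadj.2]
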